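/- Let Q_r be the r×r matrix with q_{ij} = j - i + 1 for i ≤ j, q_{ij} = -1 for i = j+1, and 0 otherwise. Then det(Q_r) = F_{2r}, the Fibonacci number with even index 2r. -/

import Mathlib

open Matrix

private def Qm (n : ℕ) : Matrix (Fin n) (Fin n) ℤ :=
  Matrix.of fun i j =>
    if (i : ℕ) ≤ (j : ℕ) then (((j : ℕ) - (i : ℕ) + 1 : ℕ) : ℤ)
    else if (i : ℕ) = (j : ℕ) + 1 then -1
    else 0

private def Cm (n : ℕ) : Matrix (Fin n) (Fin n) ℤ :=
  Matrix.of fun i j =>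
    if (i : ℕ) = 0 then 1
    else if (i : ℕ) ≤ (j : ℕ) then (((j : ℕ) - (i : ℕ) + 1 : ℕ) : ℤ)
    else if (i : ℕ) = (j : ℕ) + 1 then -1
    else 0

private lemma Qm_sub0 (n : ℕ) :
    (Qm (n+2)).submatrix (Fin.succAbove 0) Fin.succ = Qm (n+1) := by
  ext i j
  simp [Qm, Matrix.submatrix, Fin.succAbove, Nat.succ_sub_succ]

private lemma Qm_sub1 (n : ℕ) :
    (Qm (n+2)).submatrix (Fin.succAbove 1) Fin.succ
      = Matrix.updateRow (Qm (n+1)) 0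
          (fun j => ((((j:ℕ) + 1 : ℕ)) : ℤ) + 1) := by
  ext i j
  rcases Fin.eq_zero_or_eq_succ i with h | ⟨k, rfl⟩
  · subst h
    simp [Qm, Matrix.submatrix, Fin.succAbove]
  · rw [Matrix.updateRow_ne (Fin.succ_ne_zero k)]
    simp [Qm, Matrix.submatrix, Fin.succAbove, Fin.succ_ne_zero, Nat.succ_sub_succ]

private lemma Cm_sub0 (n : ℕ) :
    (Cm (n+2)).submatrix (Fin.succAbove 0) Fin.succ = Qm (n+1) := by
  ext i j
  simp [Qm, Cm, Matrix.submatrix, Fin.succAbove, Nat.succ_sub_succ]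

private lemma Cm_sub1 (n : ℕ) :
    (Cm (n+2)).submatrix (Fin.succAbove 1) Fin.succ = Cm (n+1) := by
  ext i j
  rcases Fin.eq_zero_or_eq_succ i with h | ⟨k, rfl⟩
  · subst h
    simp [Cm, Matrix.submatrix, Fin.succAbove]
  · simp [Cm, Matrix.submatrix, Fin.succAbove, Fin.succ_ne_zero, Nat.succ_sub_succ]

private lemma updateQ (n : ℕ) :
    Matrix.updateRow (Qm (n+1)) 0 (fun j => ((((j:ℕ) + 1 : ℕ)) : ℤ)) = Qm (n+1) := by
  ext i j
  rcases eq_or_ne i 0 with rfl | h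
  · simp [Qm]
  · simp [Matrix.updateRow_ne h]

private lemma updateC (n : ℕ) :
    Matrix.updateRow (Qm (n+1)) 0 (fun _ => (1:ℤ)) = Cm (n+1) := by
  ext i j
  rcases eq_or_ne i 0 with rfl | h
  · simp [Cm]
  · have h' : (i:ℕ) ≠ 0 := Fin.val_ne_of_ne h
    simp [Matrix.updateRow_ne h, Qm, Cm, h', h]

private lemma detQ_rec (n : ℕ) :
    (Qm (n+2)).det = 2 * (Qm (n+1)).det + (Cm (n+1)).det := by
  rw [Matrix.det_succ_column_zero]
  rw [Fin.sum_univ_succ, Fin.sum_univ_succ]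
  have hz : ∀ i : Fin n, (Qm (n+2)) i.succ.succ 0 = 0 := by
    intro i
    simp [Qm, Fin.succ_ne_zero]
  simp only [hz, mul_zero, zero_mul, mul_comm, Finset.sum_const_zero, add_zero,
    Fin.succ_zero_eq_one]
  have h0 : (Qm (n+2)) 0 0 = 1 := by simp [Qm]
  have h1 : (Qm (n+2)) 1 0 = -1 := by simp [Qm]
  rw [h0, h1, Qm_sub0, Qm_sub1]
  have hfun : (fun j : Fin (n+1) => ((((j:ℕ) + 1 : ℕ)) : ℤ) + 1) =
      (fun j : Fin (n+1) => ((((j:ℕ) + 1 : ℕ)) : ℤ)) + (fun _ => (1:ℤ)) := by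
    funext j; simp
  rw [hfun, Matrix.det_updateRow_add, updateQ, updateC]
  simp
  ring

private lemma detC_rec (n : ℕ) :
    (Cm (n+2)).det = (Qm (n+1)).det + (Cm (n+1)).det := by
  rw [Matrix.det_succ_column_zero]
  rw [Fin.sum_univ_succ, Fin.sum_univ_succ]
  have hz : ∀ i : Fin n, (Cm (n+2)) i.succ.succ 0 = 0 := by
    intro i
    simp [Cm, Fin.succ_ne_zero]
  simp only [hz, mul_zero, zero_mul, mul_comm, Finset.sum_const_zero, add_zero,
    Fin.succ_zero_eq_one]
  have h0 : (Cm (n+2)) 0 0 = 1 := by simp [Cm]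
  have h1 : (Cm (n+2)) 1 0 = -1 := by simp [Cm]
  rw [h0, h1, Cm_sub0, Cm_sub1]
  simp

private lemma det_key : ∀ n : ℕ,
    (Qm (n+1)).det = (Nat.fib (2*n+2) : ℤ) ∧
    (Cm (n+1)).det = (Nat.fib (2*n+1) : ℤ) := by
  intro n
  induction n with
  | zero =>
    constructor
    · rw [Matrix.det_fin_one]; simp [Qm]
    · rw [Matrix.det_fin_one]; simp [Cm]
  | succ k ih =>
    obtain ⟨hQ, hC⟩ := ih
    constructor
    · have hfib2 : Nat.fib (2*k+3) = Nat.fib (2*k+2) + Nat.fib (2*k+1) := by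
        rw [show 2*k+3 = (2*k+1)+2 from by ring, Nat.fib_add_two]
        ring
      have hfib1 : Nat.fib (2*k+4) = 2 * Nat.fib (2*k+2) + Nat.fib (2*k+1) := by
        rw [show 2*k+4 = (2*k+2)+2 from by ring, Nat.fib_add_two, hfib2]
        ring
      rw [detQ_rec, hQ, hC, show 2*(k+1)+2 = 2*k+4 from by ring, hfib1]
      push_cast
      ring
    · have hfib2 : Nat.fib (2*k+3) = Nat.fib (2*k+2) + Nat.fib (2*k+1) := by
        rw [show 2*k+3 = (2*k+1)+2 from by ring, Nat.fib_add_two]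
        ring
      rw [detC_rec, hQ, hC, show 2*(k+1)+1 = 2*k+3 from by ring, hfib2]
      push_cast
      ring

/-- The even-indexed Fibonacci number `F_{2r}` as the determinant of the matrix
`Q_r` with `q_{ij} = j - i + 1` for `i ≤ j` (1-based), `-1` on the subdiagonal
and `0` elsewhere. -/
theorem fib_even_index_det (r : ℕ) (hr : 1 ≤ r) :
    Matrix.det (Matrix.of fun i j : Fin r =>
      if (i : ℕ) ≤ (j : ℕ) then (((j : ℕ) - (i : ℕ) + 1 : ℕ) : ℤ)
      else if (i : ℕ) = (j : ℕ) + 1 then -1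
      else 0) = (Nat.fib (2 * r) : ℤ) := by
  obtain ⟨n, rfl⟩ : ∃ n, r = n + 1 := ⟨r - 1, by omega⟩
  have h := (det_key n).1
  rw [show 2*(n+1) = 2*n+2 from by ring, ← h]
  rfl
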